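/- Fix integers d ≥ 1 and m ≥ 1, and for i ≥ 0 let N(i) denote the cardinality of RC(i,d) (so N(0) = 1, counting the empty word). Then for every codeword c = c_{m−1} c_{m−2} ... c_0 in RC(m,d), the lexicographic index g(c), i.e., the number of codewords of RC(m,d) lexicographically smaller than c, equals Σ_{i=0}^{m−1} c_i · N(i), where each bit c_i is viewed as the natural number 0 or 1. -/

import Mathlib

/-- The (d,∞) LO-RLL code: binary words of length `m` (position `m-1` most
significant) in which any two 1's are separated by at least `d` 0's,
i.e. containing no contiguous subword `1 0^j 1` with `0 ≤ j ≤ d-1`. -/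
def RC (m d : ℕ) : Set (Fin m → Fin 2) :=
  {c | ∀ i j : Fin m, c i = 1 → c j = 1 → (i : ℕ) < (j : ℕ) → (i : ℕ) + d < (j : ℕ)}

/-- `w` is lexicographically smaller than `c` (position `m-1` most significant):
at the most significant position where they differ, `w` has the smaller symbol. -/
def wordLT {m q : ℕ} (w c : Fin m → Fin q) : Prop :=
  ∃ k : Fin m, w k < c k ∧ ∀ j : Fin m, k < j → w j = c j

/-- The lexicographic index of `c` in the code `C`: the number of codewords of
`C` lexicographically smaller than `c`. -/
noncomputable def lexIndex {m q : ℕ} (C : Set (Fin m → Fin q)) (c : Fin m → Fin q) : ℕ :=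
  {w ∈ C | wordLT w c}.ncard

theorem stmt1 (d m : ℕ) (hd : 1 ≤ d) (hm : 1 ≤ m)
    (c : Fin m → Fin 2) (hc : c ∈ RC m d) :
    lexIndex (RC m d) c = ∑ i : Fin m, (c i : ℕ) * (RC (i : ℕ) d).ncard := by
  classical
  have two : ∀ x : Fin 2, x = 0 ∨ x = 1 := by decide
  have lt1 : ∀ x : Fin 2, x < 1 → x = 0 := by decide
  set S : Fin m → Set (Fin m → Fin 2) := fun k =>
    {w | w ∈ RC m d ∧ w k < c k ∧ ∀ j : Fin m, k < j → w j = c j} with hS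
  have hTeq : {w ∈ RC m d | wordLT w c} = ⋃ k, S k := by
    ext w
    simp only [Set.mem_setOf_eq, Set.mem_iUnion, hS, wordLT]
    constructor
    · rintro ⟨hw, k, h1, h2⟩; exact ⟨k, hw, h1, h2⟩
    · rintro ⟨k, hw, h1, h2⟩; exact ⟨hw, k, h1, h2⟩
  have hfin : ∀ k, (S k).Finite := fun k => Set.toFinite _
  have hdisj : ∀ k l : Fin m, k < l → Disjoint (S k) (S l) := by
    intro k l hkl
    rw [Set.disjoint_left]
    rintro w ⟨_, _, hk2⟩ ⟨_, hl1, _⟩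
    rw [hk2 l hkl] at hl1
    exact lt_irrefl _ hl1
  have key : ∀ k : Fin m, (S k).ncard = (c k : ℕ) * (RC (k : ℕ) d).ncard := by
    intro k
    rcases two (c k) with h0 | h1
    · have : S k = ∅ := Set.eq_empty_of_forall_notMem (by
        rintro w ⟨-, hlt, -⟩
        rw [h0] at hlt
        exact absurd hlt (by simp [Fin.lt_def]))
      rw [this, h0]; simp
    · -- c k = 1 case
      set r : (Fin m → Fin 2) → (Fin (k : ℕ) → Fin 2) :=
        fun w i => w ⟨i.val, i.isLt.trans k.isLt⟩ with hr
      have himg : r '' (S k) = RC (k : ℕ) d := by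
        ext v
        constructor
        · rintro ⟨w, ⟨hwRC, _, _⟩, rfl⟩
          intro i j hi hj hij
          exact hwRC _ _ hi hj hij
        · intro hv
          set w : Fin m → Fin 2 := fun i =>
            if h : (i : ℕ) < (k : ℕ) then v ⟨i, h⟩
            else if (i : ℕ) = (k : ℕ) then 0 else c i with hw
          have hwk : w k = 0 := by
            show (if h : ((k:Fin m):ℕ) < (k:ℕ) then v ⟨k, h⟩ else if ((k:Fin m):ℕ) = (k:ℕ) then 0 else c k) = 0
            rw [dif_neg (by omega), if_pos rfl]
          have hwlow : ∀ i : Fin m, ∀ h : (i:ℕ) < (k:ℕ), w i = v ⟨i, h⟩ := by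
            intro i h
            show (if h : (i:ℕ) < (k:ℕ) then v ⟨i, h⟩ else if (i:ℕ) = (k:ℕ) then 0 else c i) = v ⟨i, h⟩
            rw [dif_pos h]
          have hwhigh : ∀ i : Fin m, (k:ℕ) < (i:ℕ) → w i = c i := by
            intro i h
            show (if h : (i:ℕ) < (k:ℕ) then v ⟨i, h⟩ else if (i:ℕ) = (k:ℕ) then 0 else c i) = c i
            rw [dif_neg (by omega), if_neg (by omega)]
          refine ⟨w, ⟨?_, ?_, ?_⟩, ?_⟩
          · -- w ∈ RC m d
            intro i j hi hj hij
            rcases lt_trichotomy (j : ℕ) (k : ℕ) with hjk | hjk | hjk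
            · have hik : (i : ℕ) < (k : ℕ) := hij.trans hjk
              rw [hwlow i hik] at hi
              rw [hwlow j hjk] at hj
              exact hv _ _ hi hj hij
            · have : j = k := Fin.ext hjk
              rw [this, hwk] at hj
              exact absurd hj (by decide)
            · rw [hwhigh j hjk] at hj
              rcases lt_trichotomy (i : ℕ) (k : ℕ) with hik | hik | hik
              · have := hc k j h1 hj hjk
                omega
              · have : i = k := Fin.ext hik
                rw [this, hwk] at hi
                exact absurd hi (by decide)
              · rw [hwhigh i hik] at hi
                exact hc i j hi hj hij
          · rw [hwk, h1]; decide
          · intro j hj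
            exact hwhigh j hj
          · funext i
            show w ⟨i.val, i.isLt.trans k.isLt⟩ = v i
            rw [hwlow ⟨i.val, i.isLt.trans k.isLt⟩ i.isLt]
      have hinj : Set.InjOn r (S k) := by
        rintro w ⟨_, hwk, hwh⟩ w' ⟨_, hwk', hwh'⟩ heq
        rw [h1] at hwk hwk'
        funext i
        rcases lt_trichotomy (i : ℕ) (k : ℕ) with hik | hik | hik
        · have := congrFun heq ⟨i, hik⟩
          simpa [hr, Fin.ext_iff] using this
        · have : i = k := Fin.ext hik
          rw [this, lt1 _ hwk, lt1 _ hwk']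
        · rw [hwh i hik, hwh' i hik]
      rw [← himg, Set.ncard_image_of_injOn hinj, h1]
      simp
  -- now compute the total
  set F : Fin m → Finset (Fin m → Fin 2) := fun k => (hfin k).toFinset with hF
  have hcoe : ⋃ k, S k = ↑(Finset.univ.biUnion F) := by
    ext w
    constructor
    · intro hw
      obtain ⟨i, hi⟩ := Set.mem_iUnion.1 hw
      simp only [Finset.mem_coe, Finset.mem_biUnion]
      exact ⟨i, Finset.mem_univ _, (Set.Finite.mem_toFinset _).2 hi⟩
    · intro hw
      simp only [Finset.mem_coe, Finset.mem_biUnion] at hw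
      obtain ⟨i, -, hi⟩ := hw
      exact Set.mem_iUnion.2 ⟨i, (Set.Finite.mem_toFinset _).1 hi⟩
  have hcard : (⋃ k, S k).ncard = ∑ k : Fin m, (S k).ncard := by
    rw [hcoe, Set.ncard_coe_finset, Finset.card_biUnion]
    · exact Finset.sum_congr rfl fun k _ => (Set.ncard_eq_toFinset_card _ (hfin k)).symm
    · intro k _ l _ hkl
      rw [Function.onFun, Finset.disjoint_left]
      intro w hwk hwl
      rw [hF, Set.Finite.mem_toFinset] at hwk hwl
      rcases lt_or_gt_of_ne hkl with h | h
      · exact Set.disjoint_left.mp (hdisj k l h) hwk hwl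
      · exact Set.disjoint_left.mp (hdisj l k h) hwl hwk
  rw [lexIndex, hTeq, hcard]
  exact Finset.sum_congr rfl fun k _ => key k
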